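/- If C is a cycle in Γ with no exit, then in L_k(Γ) one has C C* = s(C) = C* C. -/

import Mathlib

/-! Preamble: digraphs, paths, and Leavitt path algebras over a commutative ring. -/

structure DGraph : Type 1 where
  V : Type
  E : Type
  s : E → V
  t : E → V

namespace DGraph

/-- Generators of the Leavitt path algebra: vertices, arrows, ghost (dual) arrows. -/
inductive Gen (Γ : DGraph) : Type
  | vert : Γ.V → Gen Γ
  | edge : Γ.E → Gen Γ
  | ghost : Γ.E → Gen Γ

variable (Γ : DGraph)

def IsSink (v : Γ.V) : Prop := ∀ e : Γ.E, Γ.s e ≠ v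

def RowFinite : Prop := ∀ v : Γ.V, {e : Γ.E | Γ.s e = v}.Finite

/-- `IsWalkFrom v l` : the list of arrows `l` forms a path starting at `v`. -/
def IsWalkFrom : Γ.V → List Γ.E → Prop
  | _, [] => True
  | v, e :: l => Γ.s e = v ∧ IsWalkFrom (Γ.t e) l

/-- Target of a walk. -/
def walkTrg : Γ.V → List Γ.E → Γ.V
  | v, [] => v
  | _, e :: l => walkTrg (Γ.t e) l

/-- A (finite) path in `Γ`: a source vertex together with a compatible list of arrows.
A path of length 0 is a single vertex. -/
structure Path (Γ : DGraph) : Type where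
  src : Γ.V
  edges : List Γ.E
  valid : Γ.IsWalkFrom src edges

variable {Γ}

def Path.trg (p : Path Γ) : Γ.V := Γ.walkTrg p.src p.edges

/-- `q` is an initial segment of `p`, i.e. `p = q r`. -/
def IsInitialSegment (q p : Path Γ) : Prop := p.src = q.src ∧ q.edges <+: p.edges

/-- A cycle: a path of positive length from a vertex back to itself with pairwise
distinct sources of its arrows. -/
def Path.IsCycle (p : Path Γ) : Prop :=
  p.edges ≠ [] ∧ p.trg = p.src ∧ (p.edges.map Γ.s).Nodup

/-- The vertex `v` is on the path `p`. -/
def Path.OnPath (p : Path Γ) (v : Γ.V) : Prop := p.src = v ∨ ∃ e ∈ p.edges, Γ.t e = v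

/-- The path `p` has no exit: every arrow whose source is on `p` is an arrow of `p`. -/
def NoExit (p : Path Γ) : Prop := ∀ f : Γ.E, p.OnPath (Γ.s f) → f ∈ p.edges

variable (Γ)

/-- There is a path from `u` to `v`. -/
def Reaches (u v : Γ.V) : Prop := ∃ p : Path Γ, p.src = u ∧ p.trg = v

/-- The cycles of `Γ` are pairwise disjoint: two cycles sharing a vertex coincide
(up to rotation, i.e. they have the same arrows). -/
def CyclesPairwiseDisjoint : Prop :=
  ∀ C D : Path Γ, C.IsCycle → D.IsCycle → (∃ v, C.OnPath v ∧ D.OnPath v) →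
    C.edges.Perm D.edges

def Hereditary (H : Set Γ.V) : Prop := ∀ u v : Γ.V, u ∈ H → Γ.Reaches u v → v ∈ H

def Saturated (H : Set Γ.V) : Prop :=
  ∀ v : Γ.V, ¬ Γ.IsSink v → {e : Γ.E | Γ.s e = v}.Finite →
    (∀ e : Γ.E, Γ.s e = v → Γ.t e ∈ H) → v ∈ H

/-- The full subgraph of `Γ` on a set `W` of vertices. -/
abbrev restrict (W : Set Γ.V) : DGraph where
  V := W
  E := {e : Γ.E // Γ.s e ∈ W ∧ Γ.t e ∈ W}
  s e := ⟨Γ.s e.1, e.2.1⟩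
  t e := ⟨Γ.t e.1, e.2.2⟩

/-- The defining relations of the Leavitt path algebra, as a relation on the free
algebra on the generators: (V), (E), (CK1) and (CK2) (the latter imposed at every
vertex which is not a sink and emits finitely many arrows). -/
inductive LRel (k : Type) [CommRing k] (Γ : DGraph) :
    FreeAlgebra k (Gen Γ) → FreeAlgebra k (Gen Γ) → Prop
  | vert_idem (v : Γ.V) :
      LRel k Γ (FreeAlgebra.ι k (Gen.vert v) * FreeAlgebra.ι k (Gen.vert v))
        (FreeAlgebra.ι k (Gen.vert v))
  | vert_orth (v w : Γ.V) : v ≠ w →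
      LRel k Γ (FreeAlgebra.ι k (Gen.vert v) * FreeAlgebra.ι k (Gen.vert w)) 0
  | edge_src (e : Γ.E) :
      LRel k Γ (FreeAlgebra.ι k (Gen.vert (Γ.s e)) * FreeAlgebra.ι k (Gen.edge e))
        (FreeAlgebra.ι k (Gen.edge e))
  | edge_trg (e : Γ.E) :
      LRel k Γ (FreeAlgebra.ι k (Gen.edge e) * FreeAlgebra.ι k (Gen.vert (Γ.t e)))
        (FreeAlgebra.ι k (Gen.edge e))
  | ghost_src (e : Γ.E) :
      LRel k Γ (FreeAlgebra.ι k (Gen.vert (Γ.t e)) * FreeAlgebra.ι k (Gen.ghost e))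
        (FreeAlgebra.ι k (Gen.ghost e))
  | ghost_trg (e : Γ.E) :
      LRel k Γ (FreeAlgebra.ι k (Gen.ghost e) * FreeAlgebra.ι k (Gen.vert (Γ.s e)))
        (FreeAlgebra.ι k (Gen.ghost e))
  | ck1_same (e : Γ.E) :
      LRel k Γ (FreeAlgebra.ι k (Gen.ghost e) * FreeAlgebra.ι k (Gen.edge e))
        (FreeAlgebra.ι k (Gen.vert (Γ.t e)))
  | ck1_diff (e f : Γ.E) : e ≠ f →
      LRel k Γ (FreeAlgebra.ι k (Gen.ghost e) * FreeAlgebra.ι k (Gen.edge f)) 0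
  | ck2 (v : Γ.V) (h : {e : Γ.E | Γ.s e = v}.Finite) (hns : ¬ Γ.IsSink v) :
      LRel k Γ (FreeAlgebra.ι k (Gen.vert v))
        (∑ e ∈ h.toFinset, FreeAlgebra.ι k (Gen.edge e) * FreeAlgebra.ι k (Gen.ghost e))

/-- The (unitized) Leavitt path algebra of `Γ` over `k`.  For a digraph with finitely
many vertices, see `LVF` below where additionally `1 = Σ v` is imposed; in general the
Leavitt path algebra proper is the (non-unital) subalgebra spanned by the nonempty
words in the generators, cf. `lpa`. -/
abbrev LV (k : Type) [CommRing k] (Γ : DGraph) : Type := RingQuot (LRel k Γ)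

/-- The image of a generator in the Leavitt path algebra. -/
def genL (k : Type) [CommRing k] (Γ : DGraph) (g : Gen Γ) : LV k Γ :=
  RingQuot.mkAlgHom k (LRel k Γ) (FreeAlgebra.ι k g)

/-- For `Γ` with finitely many vertices, the relations of the Leavitt path algebra
together with `1 = Σ_{v ∈ V} v`. -/
def LRelU (k : Type) [CommRing k] (Γ : DGraph) [Fintype Γ.V] :
    FreeAlgebra k (Gen Γ) → FreeAlgebra k (Gen Γ) → Prop :=
  fun a b => LRel k Γ a b ∨
    (a = 1 ∧ b = ∑ v : Γ.V, FreeAlgebra.ι k (Gen.vert v))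

/-- The Leavitt path algebra of a digraph with finitely many vertices (a unital
algebra, with `1 = Σ_{v ∈ V} v`). -/
abbrev LVF (k : Type) [CommRing k] (Γ : DGraph) [Fintype Γ.V] : Type :=
  RingQuot (LRelU k Γ)

def genF (k : Type) [CommRing k] (Γ : DGraph) [Fintype Γ.V] (g : Gen Γ) : LVF k Γ :=
  RingQuot.mkAlgHom k (LRelU k Γ) (FreeAlgebra.ι k g)

section Words

variable {k : Type} [CommRing k] {A : Type} [Ring A]

/-- The element `v e₁ ⋯ e_n` of an algebra `A`, given an interpretation `g` of the
generators. -/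
def wordElem (g : Gen Γ → A) (v : Γ.V) (l : List Γ.E) : A :=
  g (Gen.vert v) * (l.map fun e => g (Gen.edge e)).prod

/-- The element `e_n* ⋯ e₁* v`. -/
def wordStar (g : Gen Γ → A) (v : Γ.V) (l : List Γ.E) : A :=
  (l.reverse.map fun e => g (Gen.ghost e)).prod * g (Gen.vert v)

variable {Γ}

/-- The element of the algebra corresponding to a path `p`. -/
def pElem (g : Gen Γ → A) (p : Path Γ) : A := wordElem Γ g p.src p.edges

/-- The element of the algebra corresponding to the dual path `p*`. -/
def pStar (g : Gen Γ → A) (p : Path Γ) : A := wordStar Γ g p.src p.edges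

/-- `Cⁿ` for `n ∈ ℤ`, with `C⁰ := s(C)` and `C⁻ⁿ := (C*)ⁿ`. -/
def cycPow (g : Gen Γ → A) (C : Path Γ) (n : ℤ) : A :=
  if n = 0 then g (Gen.vert C.src)
  else if 0 < n then pElem g C ^ n.toNat
  else pStar g C ^ (-n).toNat

end Words

/-- The k-submodule of the unitized algebra `LV k Γ` spanned by the nonempty words
in the generators: this is the Leavitt path algebra proper (a two-sided ideal). -/
def lpa (k : Type) [CommRing k] (Γ : DGraph) : Submodule k (LV k Γ) :=
  Submodule.span k
    {x : LV k Γ | ∃ l : List (Gen Γ), l ≠ [] ∧ x = (l.map (genL k Γ)).prod}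

/-- The image of the path algebra `kΓ` in `LV k Γ`: the k-span of the paths. -/
def pathSpan (k : Type) [CommRing k] (Γ : DGraph) : Submodule k (LV k Γ) :=
  Submodule.span k (Set.range (pElem (genL k Γ)))

/-- The right ideal generated by an element `a` of a ring `A` (a submodule for the
right action of `A`, i.e. an `Aᵐᵒᵖ`-submodule). -/
def rIdeal (A : Type) [Ring A] (a : A) : Submodule Aᵐᵒᵖ A :=
  Submodule.span Aᵐᵒᵖ {a}

/-- A right `LV k Γ`-module (i.e. left `(LV k Γ)ᵐᵒᵖ`-module) is unital if
`M = M ⬝ L(Γ)`, equivalently every element is a finite sum of elements of `M·v·L`. -/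
def IsUnitalMod (k : Type) [CommRing k] (Γ : DGraph) (M : Type) [AddCommGroup M]
    [Module (LV k Γ)ᵐᵒᵖ M] : Prop :=
  ∀ m : M, m ∈ Submodule.span (LV k Γ)ᵐᵒᵖ
    {x : M | ∃ (v : Γ.V) (y : M), x = (MulOpposite.op (genL k Γ (Gen.vert v))) • y}

/-- One-step reduction of `Γ` at a loopless vertex `v`: paths of length two through
`v` become new arrows, and `v` together with all arrows touching it is deleted. -/
abbrev reduceAt (v : Γ.V) (hl : ∀ e : Γ.E, Γ.s e = v → Γ.t e ≠ v) : DGraph where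
  V := {u : Γ.V // u ≠ v}
  E := {e : Γ.E // Γ.s e ≠ v ∧ Γ.t e ≠ v} ⊕
       {fg : Γ.E × Γ.E // Γ.t fg.1 = v ∧ Γ.s fg.2 = v}
  s := fun x => match x with
    | Sum.inl e => ⟨Γ.s e.1, e.2.1⟩
    | Sum.inr fg => ⟨Γ.s fg.1.1, fun h => hl fg.1.1 h fg.2.1⟩
  t := fun x => match x with
    | Sum.inl e => ⟨Γ.t e.1, e.2.2⟩
    | Sum.inr fg => ⟨Γ.t fg.1.2, fun h => hl fg.1.2 fg.2.2 h⟩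

/-- The homogeneous component of degree `g` of `LV k Γ` with respect to a degree
assignment `d` on the generators, with values in a group `G`. -/
def gcomp (k : Type) [CommRing k] (Γ : DGraph) {G : Type} [Group G]
    (d : Gen Γ → G) (g : G) : Submodule k (LV k Γ) :=
  Submodule.span k
    {x : LV k Γ | ∃ l : List (Gen Γ), (l.map d).prod = g ∧ x = (l.map (genL k Γ)).prod}

/-- The universal degree assignment, with values in the free group on the arrows. -/
def dUniv (Γ : DGraph) : Gen Γ → FreeGroup Γ.E
  | Gen.vert _ => 1
  | Gen.edge e => FreeGroup.of e
  | Gen.ghost e => (FreeGroup.of e)⁻¹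

end DGraph

/-- Gelfand–Kirillov dimension of an `F`-algebra (value in `ℝ≥0∞`):
`limsup_n log dim(Wⁿ)/log n` for a finite-dimensional generating subspace `W`
containing `1` (the supremum is taken over all such `W`; for a finitely generated
algebra the value does not depend on the choice). -/
noncomputable def gkDim (F A : Type) [Field F] [Ring A] [Algebra F A] : ENNReal :=
  ⨆ W : {W : Submodule F A //
      FiniteDimensional F W ∧ (1 : A) ∈ W ∧ ∀ x : A, ∃ n : ℕ, x ∈ (W : Submodule F A) ^ n},
    Filter.limsup (fun n : ℕ =>
      ENNReal.ofReal
        (Real.log (Module.finrank F ↥((W : Submodule F A) ^ n)) / Real.log n))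
      Filter.atTop

/-- A module is indecomposable if it is nonzero and admits no nontrivial direct sum
decomposition. -/
def IsIndecomposableModule (R M : Type) [Ring R] [AddCommGroup M] [Module R M] : Prop :=
  Nontrivial M ∧ ∀ A B : Submodule R M, IsCompl A B → A = ⊥ ∨ B = ⊥

namespace CycleNoExitAux

open DGraph

variable (k : Type) [CommRing k] (Γ : DGraph)

local notation "gg" => genL k Γ

lemma gv_idem (v : Γ.V) : gg (Gen.vert v) * gg (Gen.vert v) = gg (Gen.vert v) := by
  simpa only [genL, map_mul] using RingQuot.mkAlgHom_rel k (LRel.vert_idem (k := k) v)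

lemma gv_edge (e : Γ.E) : gg (Gen.vert (Γ.s e)) * gg (Gen.edge e) = gg (Gen.edge e) := by
  simpa only [genL, map_mul] using RingQuot.mkAlgHom_rel k (LRel.edge_src (k := k) e)

lemma edge_gv (e : Γ.E) : gg (Gen.edge e) * gg (Gen.vert (Γ.t e)) = gg (Gen.edge e) := by
  simpa only [genL, map_mul] using RingQuot.mkAlgHom_rel k (LRel.edge_trg (k := k) e)

lemma gv_ghost (e : Γ.E) : gg (Gen.vert (Γ.t e)) * gg (Gen.ghost e) = gg (Gen.ghost e) := by
  simpa only [genL, map_mul] using RingQuot.mkAlgHom_rel k (LRel.ghost_src (k := k) e)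

lemma ghost_gv (e : Γ.E) : gg (Gen.ghost e) * gg (Gen.vert (Γ.s e)) = gg (Gen.ghost e) := by
  simpa only [genL, map_mul] using RingQuot.mkAlgHom_rel k (LRel.ghost_trg (k := k) e)

lemma ck1 (e : Γ.E) : gg (Gen.ghost e) * gg (Gen.edge e) = gg (Gen.vert (Γ.t e)) := by
  simpa only [genL, map_mul] using RingQuot.mkAlgHom_rel k (LRel.ck1_same (k := k) e)

lemma ck2 (v : Γ.V) (h : {e : Γ.E | Γ.s e = v}.Finite) (hns : ¬ Γ.IsSink v) :
    gg (Gen.vert v) = ∑ e ∈ h.toFinset, gg (Gen.edge e) * gg (Gen.ghost e) := by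
  simpa only [genL, map_mul, map_sum] using RingQuot.mkAlgHom_rel k (LRel.ck2 (k := k) v h hns)

/-- `e* … e* v e … e = walkTrg v l` for a walk `l` from `v`. -/
lemma star_mul_walk : ∀ (l : List Γ.E) (v : Γ.V), Γ.IsWalkFrom v l →
    (l.reverse.map fun e => gg (Gen.ghost e)).prod * gg (Gen.vert v) *
      (l.map fun e => gg (Gen.edge e)).prod = gg (Gen.vert (Γ.walkTrg v l))
  | [], v, _ => by simp [DGraph.walkTrg, gv_idem]
  | e :: l, v, h => by
    obtain ⟨hs, hw⟩ := h
    have ih := star_mul_walk l (Γ.t e) hw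
    have : (((e :: l).reverse.map fun e => gg (Gen.ghost e)).prod * gg (Gen.vert v) *
        ((e :: l).map fun e => gg (Gen.edge e)).prod) =
        (l.reverse.map fun e => gg (Gen.ghost e)).prod *
          ((gg (Gen.ghost e) * gg (Gen.vert (Γ.s e))) * gg (Gen.edge e)) *
          (l.map fun e => gg (Gen.edge e)).prod := by
      rw [hs]; simp [List.map_append, mul_assoc]
    rw [this, ghost_gv, ck1, DGraph.walkTrg, ← ih]

/-- If every edge of the walk satisfies `e e* = s(e)`, then
`e₁ ⋯ eₙ eₙ* ⋯ e₁* = s(e₁)` for a nonempty walk. -/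
lemma mul_star_walk : ∀ (l : List Γ.E) (v : Γ.V), Γ.IsWalkFrom v l → l ≠ [] →
    (∀ e ∈ l, gg (Gen.edge e) * gg (Gen.ghost e) = gg (Gen.vert (Γ.s e))) →
    (l.map fun e => gg (Gen.edge e)).prod * (l.reverse.map fun e => gg (Gen.ghost e)).prod =
      gg (Gen.vert v)
  | [], _, _, hne, _ => absurd rfl hne
  | e :: l, v, h, _, hck => by
    obtain ⟨hs, hw⟩ := h
    have key : (l.map fun e => gg (Gen.edge e)).prod *
        (l.reverse.map fun e => gg (Gen.ghost e)).prod * gg (Gen.ghost e) =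
        gg (Gen.ghost e) := by
      rcases eq_or_ne l [] with rfl | hl
      · simp
      · rw [mul_star_walk l (Γ.t e) hw hl (fun f hf => hck f (List.mem_cons_of_mem _ hf)),
          gv_ghost]
    calc ((e :: l).map fun e => gg (Gen.edge e)).prod *
          ((e :: l).reverse.map fun e => gg (Gen.ghost e)).prod
        = gg (Gen.edge e) * ((l.map fun e => gg (Gen.edge e)).prod *
            (l.reverse.map fun e => gg (Gen.ghost e)).prod * gg (Gen.ghost e)) := by
          simp [List.map_append, mul_assoc]
      _ = gg (Gen.vert v) := by rw [key, hck e List.mem_cons_self, hs]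

lemma src_on_walk : ∀ (l : List Γ.E) (v : Γ.V), Γ.IsWalkFrom v l → ∀ e ∈ l,
    Γ.s e = v ∨ ∃ f ∈ l, Γ.t f = Γ.s e
  | [], _, _, e, he => absurd he List.not_mem_nil
  | e' :: l, v, ⟨hs, hw⟩, e, he => by
    rcases List.mem_cons.mp he with rfl | he
    · exact Or.inl hs
    · rcases src_on_walk l (Γ.t e') hw e he with h | ⟨f, hf, hfe⟩
      · exact Or.inr ⟨e', List.mem_cons_self, h.symm⟩
      · exact Or.inr ⟨f, List.mem_cons_of_mem _ hf, hfe⟩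

end CycleNoExitAux

open CycleNoExitAux in
open DGraph in
/-- if `C` is a cycle in `Γ` with no exit then `C C* = s(C) = C* C`. -/
theorem cycle_no_exit_mul_star' (k : Type) [CommRing k] (Γ : DGraph)
    (C : Path Γ) (hC : C.IsCycle) (hne : NoExit C) :
    pElem (genL k Γ) C * pStar (genL k Γ) C = genL k Γ (Gen.vert C.src) ∧
    pStar (genL k Γ) C * pElem (genL k Γ) C = genL k Γ (Gen.vert C.src) := by
  obtain ⟨hnil, htrg, hnd⟩ := hC
  -- single-edge CK2 at each vertex of C
  have hck : ∀ e ∈ C.edges, genL k Γ (Gen.edge e) * genL k Γ (Gen.ghost e) =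
      genL k Γ (Gen.vert (Γ.s e)) := by
    intro e he
    have hset : {f : Γ.E | Γ.s f = Γ.s e} = {e} := by
      ext f
      simp only [Set.mem_setOf_eq, Set.mem_singleton_iff]
      constructor
      · intro hf
        have hfC : f ∈ C.edges := by
          apply hne
          rcases src_on_walk Γ C.edges C.src C.valid e he with h | ⟨f', hf', hfe⟩
          · exact Or.inl (hf.trans h).symm
          · exact Or.inr ⟨f', hf', hfe.trans hf.symm⟩
        exact List.inj_on_of_nodup_map hnd hfC he hf
      · rintro rfl; rfl
    have hfin : {f : Γ.E | Γ.s f = Γ.s e}.Finite := hset ▸ Set.finite_singleton e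
    have hns : ¬ Γ.IsSink (Γ.s e) := fun hs => hs e rfl
    have h2 := ck2 k Γ (Γ.s e) hfin hns
    have h3 : hfin.toFinset = {e} := by
      ext f; simp only [Set.Finite.mem_toFinset, hset, Set.mem_singleton_iff,
        Finset.mem_singleton]
    rw [h2, h3, Finset.sum_singleton]
  constructor
  · -- C C* = s(C)
    show wordElem Γ (genL k Γ) C.src C.edges * wordStar Γ (genL k Γ) C.src C.edges = _
    unfold wordElem wordStar
    rw [show genL k Γ (Gen.vert C.src) * (C.edges.map fun e => genL k Γ (Gen.edge e)).prod *
        ((C.edges.reverse.map fun e => genL k Γ (Gen.ghost e)).prod *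
          genL k Γ (Gen.vert C.src)) =
        genL k Γ (Gen.vert C.src) * ((C.edges.map fun e => genL k Γ (Gen.edge e)).prod *
        (C.edges.reverse.map fun e => genL k Γ (Gen.ghost e)).prod) *
          genL k Γ (Gen.vert C.src) by simp only [mul_assoc],
      mul_star_walk k Γ C.edges C.src C.valid hnil hck, gv_idem, gv_idem]
  · -- C* C = s(C)
    show wordStar Γ (genL k Γ) C.src C.edges * wordElem Γ (genL k Γ) C.src C.edges = _
    unfold wordStar wordElem
    rw [show (C.edges.reverse.map fun e => genL k Γ (Gen.ghost e)).prod *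
        genL k Γ (Gen.vert C.src) * (genL k Γ (Gen.vert C.src) *
          (C.edges.map fun e => genL k Γ (Gen.edge e)).prod) =
        (C.edges.reverse.map fun e => genL k Γ (Gen.ghost e)).prod *
          (genL k Γ (Gen.vert C.src) * genL k Γ (Gen.vert C.src)) *
          (C.edges.map fun e => genL k Γ (Gen.edge e)).prod by simp only [mul_assoc],
      gv_idem, star_mul_walk k Γ C.edges C.src C.valid]
    exact congrArg (fun v => genL k Γ (Gen.vert v)) htrg

open DGraph in
/-- if `C` is a cycle with no exit then `C C* = s(C) = C* C`. -/
theorem cycle_no_exit_mul_star (k : Type) [CommRing k] (Γ : DGraph)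
    (C : Path Γ) (hC : C.IsCycle) (hne : NoExit C) :
    pElem (genL k Γ) C * pStar (genL k Γ) C = genL k Γ (Gen.vert C.src) ∧
    pStar (genL k Γ) C * pElem (genL k Γ) C = genL k Γ (Gen.vert C.src) :=
  cycle_no_exit_mul_star' k Γ C hC hne
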